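/- Let A ⊆ B ⊆ ℝ². For any bounded doubly increasing function u : A → ℝ, there exists a doubly increasing function w : B → ℝ whose restriction to A is u and such that the closures of the images u(A) and w(B) coincide. -/

import Mathlib

open Set

/-- A bounded doubly increasing function on `A` extends to a doubly increasing
function on any superset `B`, with the same closure of the image. -/
theorem stmt4 (A B : Set (ℝ × ℝ)) (hAB : A ⊆ B) (hA : A.Nonempty) (u : ℝ × ℝ → ℝ)
    (hmono : ∀ p ∈ A, ∀ q ∈ A, p.1 ≤ q.1 → p.2 ≤ q.2 → u p ≤ u q)
    (hbddA : BddAbove (u '' A)) (hbddB : BddBelow (u '' A)) :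
    ∃ w : ℝ × ℝ → ℝ, (∀ p ∈ A, w p = u p) ∧
      (∀ p ∈ B, ∀ q ∈ B, p.1 ≤ q.1 → p.2 ≤ q.2 → w p ≤ w q) ∧
      closure (u '' A) = closure (w '' B) := by
  set m : ℝ := sInf (u '' A) with hm
  set S : ℝ × ℝ → Set (ℝ × ℝ) := fun p => {q ∈ A | q.1 ≤ p.1 ∧ q.2 ≤ p.2} with hS
  set w : ℝ × ℝ → ℝ := fun p => sSup (insert m (u '' S p)) with hw
  have hmcl : m ∈ closure (u '' A) := csInf_mem_closure (hA.image u) hbddB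
  have hsub : ∀ p, insert m (u '' S p) ⊆ closure (u '' A) := by
    intro p
    apply insert_subset hmcl
    refine subset_trans ?_ subset_closure
    exact image_mono (f := u) (fun q hq => hq.1)
  have hbdd : ∀ p, BddAbove (insert m (u '' S p)) := by
    intro p
    exact hbddA.closure.mono (hsub p)
  have hwcl : ∀ p, w p ∈ closure (u '' A) := by
    intro p
    have h1 : sSup (insert m (u '' S p)) ∈ closure (insert m (u '' S p)) :=
      csSup_mem_closure (insert_nonempty _ _) (hbdd p)
    have h2 : closure (insert m (u '' S p)) ⊆ closure (u '' A) :=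
      closure_minimal (hsub p) isClosed_closure
    exact h2 h1
  have hext : ∀ p ∈ A, w p = u p := by
    intro p hp
    apply le_antisymm
    · apply csSup_le (insert_nonempty _ _)
      rintro x (rfl | ⟨q, hq, rfl⟩)
      · exact csInf_le_of_le hbddB ⟨p, hp, rfl⟩ le_rfl
      · exact hmono q hq.1 p hp hq.2.1 hq.2.2
    · exact le_csSup (hbdd p) (Or.inr ⟨p, ⟨hp, le_rfl, le_rfl⟩, rfl⟩)
  refine ⟨w, hext, ?_, ?_⟩
  · intro p hp q hq h1 h2
    apply csSup_le_csSup (hbdd q) (insert_nonempty _ _)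
    apply insert_subset_insert
    apply image_mono
    rintro r ⟨hr, hr1, hr2⟩
    exact ⟨hr, hr1.trans h1, hr2.trans h2⟩
  · apply le_antisymm
    · apply closure_mono
      rintro x ⟨p, hp, rfl⟩
      exact ⟨p, hAB hp, hext p hp⟩
    · apply closure_minimal ?_ isClosed_closure
      rintro x ⟨p, _, rfl⟩
      exact hwcl p
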